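/- For every integer k ≥ 9: h(Bin(k)) − h(Bin(k−1)) ≤ log₂(k)/√k. -/

import Mathlib

open Finset


lemma smce (n k : ℕ) : (k+1) * (n+1).choose (k+1) = (n+1) * n.choose k := by
  simpa [Nat.succ_eq_add_one, mul_comm] using (Nat.add_one_mul_choose_eq n k).symm

lemma sum1 (n : ℕ) : ∑ t ∈ range (n+2), t * (n+1).choose t = (n+1) * 2^n := by
  rw [Finset.sum_range_succ']
  simp only [Nat.zero_eq, zero_mul, add_zero]
  have : ∀ i ∈ range (n+1), (i+1) * (n+1).choose (i+1) = (n+1) * n.choose i :=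
    fun i _ => smce n i
  rw [Finset.sum_congr rfl this, ← Finset.mul_sum, Nat.sum_range_choose]

lemma sum2 (n : ℕ) : ∑ t ∈ range (n+3), t * ((n+2) - t) * (n+2).choose t = (n+2)*((n+1)*2^n) := by
  rw [Finset.sum_range_succ']
  simp only [Nat.zero_eq, zero_mul, add_zero]
  have h1 : ∀ i ∈ range (n+2), (i+1) * ((n+2) - (i+1)) * (n+2).choose (i+1)
      = (n+2) * (((n+1) - i) * (n+1).choose i) := by
    intro i _
    have e1 : (i+1) * ((n+2) - (i+1)) * (n+2).choose (i+1)
        = ((i+1) * (n+2).choose (i+1)) * ((n+1) - i) := by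
      have : (n+2) - (i+1) = (n+1) - i := by omega
      rw [this]; ring
    rw [e1, smce (n+1) i]; ring
  rw [Finset.sum_congr rfl h1, ← Finset.mul_sum]
  congr 1
  rw [Finset.sum_range_succ]
  simp only [Nat.sub_self, zero_mul, add_zero]
  have h2 : ∀ i ∈ range (n+1), ((n+1) - i) * (n+1).choose i = (n+1) * n.choose (n - i) := by
    intro i hi
    have hi' : i ≤ n := by simpa [Nat.lt_succ_iff] using hi
    rw [← Nat.choose_symm (show i ≤ n+1 by omega)]
    have h3 : (n+1) - i = ((n - i) + 1) := by omega
    rw [h3, smce n (n-i)]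
  rw [Finset.sum_congr rfl h2, ← Finset.mul_sum]
  congr 1
  have := Finset.sum_range_reflect (fun i => n.choose i) (n+1)
  simp only [Nat.add_sub_cancel] at this
  rw [← Nat.sum_range_choose n, ← this]

lemma sumM (k : ℕ) (hk : 3 ≤ k) :
    8 * ∑ t ∈ range k, (k-1).choose t * ((t+1)*(k-t)) = 2^k * (k*k+k+2) := by
  obtain ⟨m, rfl⟩ : ∃ m, k = m + 3 := ⟨k - 3, by omega⟩
  have expand : ∀ t ∈ range (m+3), (m+2).choose t * ((t+1)*((m+3)-t))
      = t * ((m+2) - t) * (m+2).choose t + (m+3) * (m+2).choose t := by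
    intro t ht
    have ht' : t ≤ m + 2 := by simpa [Nat.lt_succ_iff] using ht
    have e1 : (t+1)*((m+3)-t) = t * ((m+2) - t) + (m+3) := by
      have h2 : (m+3) - t = ((m+2) - t) + 1 := by omega
      rw [h2]
      have h3 : (m+2) - t + t = m + 2 := by omega
      cases' Nat.exists_eq_add_of_le ht' with c hc
      have : (m+2) - t = c := by omega
      rw [this]
      have h5 : (t+1)*(c+1) = t*c + (t + c + 1) := by ring
      have h6 : (m+2) - t = c := this
      have h7 : t + c + 1 = m + 3 := by omega
      rw [h5, h7]
    rw [e1]; ring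
  have h4 : (m+2) + 1 = m + 3 := rfl
  calc 8 * ∑ t ∈ range (m+3), (m+2).choose t * ((t+1)*((m+3)-t))
      = 8 * (∑ t ∈ range (m+3), t * ((m+2) - t) * (m+2).choose t
          + (m+3) * ∑ t ∈ range (m+3), (m+2).choose t) := by
        rw [Finset.sum_congr rfl expand, Finset.sum_add_distrib, Finset.mul_sum]
    _ = 8 * ((m+2)*((m+1)*2^m) + (m+3) * 2^(m+2)) := by
        rw [sum2 m, Nat.sum_range_choose (m+2)]
    _ = 2^(m+3) * ((m+3)*(m+3)+(m+3)+2) := by ring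

lemma key (n : ℕ) (X : ℕ → ℝ) (hX0 : X 0 = 0) :
    ∑ s ∈ range (n+2), ((n+1).choose s : ℝ) * X s
      = ∑ t ∈ range (n+1), ((n).choose t : ℝ) * (X t + X (t+1)) := by
  rw [Finset.sum_range_succ']
  simp only [Nat.choose_zero_right, Nat.cast_one, hX0, mul_zero, add_zero]
  have h1 : ∀ i ∈ range (n+1), ((n+1).choose (i+1) : ℝ) * X (i+1)
      = (n.choose i : ℝ) * X (i+1) + (n.choose (i+1) : ℝ) * X (i+1) := by
    intro i _
    rw [Nat.choose_succ_succ']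
    push_cast
    ring
  rw [Finset.sum_congr rfl h1, Finset.sum_add_distrib]
  have h2 : ∑ i ∈ range (n+1), (n.choose (i+1) : ℝ) * X (i+1)
      = ∑ i ∈ range (n+1), (n.choose i : ℝ) * X i := by
    have h3 := Finset.sum_range_succ' (fun i => (n.choose i : ℝ) * X i) (n+1)
    rw [Finset.sum_range_succ] at h3
    simp only [hX0, Nat.choose_eq_zero_of_lt (Nat.lt_succ_self n), Nat.cast_zero,
      zero_mul, mul_zero, add_zero, Nat.choose_zero_right, Nat.cast_one] at h3
    exact h3.symm
  rw [h2, ← Finset.sum_add_distrib]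
  exact Finset.sum_congr rfl fun i _ => by ring


lemma id1 (n t : ℕ) (ht : t ≤ n) : ((n+1)-t) * (n+1).choose t = (n+1) * n.choose t := by
  rw [← Nat.choose_symm (show t ≤ n+1 by omega)]
  have h3 : (n+1) - t = (n - t) + 1 := by omega
  rw [h3, smce n (n-t), Nat.choose_symm ht]

lemma logb24 : Real.logb 2 4 = 2 := by
  rw [show (4:ℝ) = 2^(2:ℕ) by norm_num, Real.logb_pow, Real.logb_self_eq_one (by norm_num)]
  norm_num

lemma bracket_le (n t : ℕ) (ht : t ≤ n) :
    2 - Real.logb 2 (((n+1).choose t : ℕ) : ℝ) - Real.logb 2 (((n+1).choose (t+1) : ℕ) : ℝ)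
      + 2 * Real.logb 2 ((n.choose t : ℕ) : ℝ)
    ≤ (4*(((n:ℝ)+1)-t)*((t:ℝ)+1)/((n:ℝ)+1)^2 - 1)/Real.log 2 := by
  set K : ℝ := (n:ℝ)+1 with hK
  have htn : (t:ℝ) ≤ n := by exact_mod_cast ht
  have hc0 : (0:ℝ) < ((n.choose t : ℕ) : ℝ) := by exact_mod_cast Nat.choose_pos ht
  have hc1 : (0:ℝ) < (((n+1).choose t : ℕ) : ℝ) := by
    exact_mod_cast Nat.choose_pos (show t ≤ n+1 by omega)
  have hc2 : (0:ℝ) < (((n+1).choose (t+1) : ℕ) : ℝ) := by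
    exact_mod_cast Nat.choose_pos (show t+1 ≤ n+1 by omega)
  have hKt : (0:ℝ) < K - t := by rw [hK]; linarith
  have hKpos : (0:ℝ) < K := by rw [hK]; linarith [Nat.cast_nonneg (α := ℝ) n]
  have htp : (0:ℝ) < (t:ℝ)+1 := by positivity
  -- cast identities
  have hid1 : (K - t) * (((n+1).choose t : ℕ) : ℝ) = K * ((n.choose t : ℕ) : ℝ) := by
    have := id1 n t ht
    have hcast : (((n+1)-t : ℕ) : ℝ) = K - t := by
      rw [hK]; push_cast [Nat.cast_sub (show t ≤ n+1 by omega)]; ring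
    calc (K - t) * (((n+1).choose t : ℕ) : ℝ)
        = ((((n+1)-t) * (n+1).choose t : ℕ) : ℝ) := by rw [Nat.cast_mul, hcast]
      _ = (((n+1) * n.choose t : ℕ) : ℝ) := by exact_mod_cast this
      _ = K * ((n.choose t : ℕ) : ℝ) := by rw [hK]; push_cast; ring
  have hid2 : ((t:ℝ)+1) * (((n+1).choose (t+1) : ℕ) : ℝ) = K * ((n.choose t : ℕ) : ℝ) := by
    have := smce n t
    calc ((t:ℝ)+1) * (((n+1).choose (t+1) : ℕ) : ℝ)
        = (((t+1) * (n+1).choose (t+1) : ℕ) : ℝ) := by push_cast; ring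
      _ = (((n+1) * n.choose t : ℕ) : ℝ) := by exact_mod_cast this
      _ = K * ((n.choose t : ℕ) : ℝ) := by rw [hK]; push_cast; ring
  have e1 : (((n+1).choose t : ℕ) : ℝ) = K * ((n.choose t : ℕ) : ℝ) / (K - t) := by
    rw [eq_div_iff hKt.ne']; linarith [hid1]
  have e2 : (((n+1).choose (t+1) : ℕ) : ℝ) = K * ((n.choose t : ℕ) : ℝ) / ((t:ℝ)+1) := by
    rw [eq_div_iff htp.ne']; linarith [hid2]
  rw [e1, e2,
    Real.logb_div (by positivity) hKt.ne', Real.logb_div (by positivity) htp.ne',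
    Real.logb_mul hKpos.ne' hc0.ne']
  have key : 2 - 2 * Real.logb 2 K + Real.logb 2 (K - t) + Real.logb 2 ((t:ℝ)+1)
      = Real.logb 2 (4*(K-t)*((t:ℝ)+1)/K^2) := by
    rw [Real.logb_div (by positivity) (by positivity),
        Real.logb_mul (by positivity) htp.ne',
        Real.logb_mul (by norm_num) hKt.ne',
        logb24,
        show (K^2 : ℝ) = K^(2:ℕ) by norm_num, Real.logb_pow]
    push_cast; ring
  have hle : Real.logb 2 (4*(K-t)*((t:ℝ)+1)/K^2) ≤ (4*(K-t)*((t:ℝ)+1)/K^2 - 1)/Real.log 2 := by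
    rw [Real.logb, Real.log_div_log]
    exact (div_le_div_iff_of_pos_right (Real.log_pos (by norm_num))).mpr
      (Real.log_le_sub_one_of_pos (by positivity))
  calc 2 - (Real.logb 2 K + Real.logb 2 ((n.choose t : ℕ) : ℝ) - Real.logb 2 (K - t))
        - (Real.logb 2 K + Real.logb 2 ((n.choose t : ℕ) : ℝ) - Real.logb 2 ((t:ℝ)+1))
        + 2 * Real.logb 2 ((n.choose t : ℕ) : ℝ)
      = 2 - 2 * Real.logb 2 K + Real.logb 2 (K - t) + Real.logb 2 ((t:ℝ)+1) := by ring
    _ = Real.logb 2 (4*(K-t)*((t:ℝ)+1)/K^2) := key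
    _ ≤ (4*(K-t)*((t:ℝ)+1)/K^2 - 1)/Real.log 2 := hle

/-- The entropy of the binomial distribution `Bin(k)` on `{0,…,k}` with probabilities
`C(k,i)/2^k`: `h(Bin(k)) = ∑_{i=0}^{k} (C(k,i)/2^k)·log₂(2^k/C(k,i))`. -/
noncomputable def binEnt (k : ℕ) : ℝ :=
  ∑ i ∈ Finset.range (k+1),
    ((k.choose i : ℝ) / 2^k) * Real.logb 2 ((2^k : ℝ) / (k.choose i))

lemma sum_w (j : ℕ) : ∑ i ∈ range (j+1), ((j.choose i : ℝ)) = 2^j := by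
  rw [← Nat.cast_sum]
  · rw [Nat.sum_range_choose]; push_cast; ring

lemma binEnt_eq (j : ℕ) :
    binEnt j = j - (1/2^j) * ∑ i ∈ range (j+1), (j.choose i : ℝ) * Real.logb 2 (j.choose i) := by
  unfold binEnt
  have h1 : ∀ i ∈ range (j+1), ((j.choose i : ℝ) / 2^j) * Real.logb 2 ((2^j : ℝ) / (j.choose i))
      = (1/2^j) * ((j.choose i : ℝ) * (j : ℝ)) - (1/2^j) * ((j.choose i : ℝ) * Real.logb 2 (j.choose i)) := by
    intro i hi
    have hpos : 0 < (j.choose i : ℝ) := by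
      have : 0 < j.choose i := Nat.choose_pos (by simpa [Nat.lt_succ_iff] using hi)
      exact_mod_cast this
    rw [Real.logb_div (by positivity) (ne_of_gt hpos)]
    rw [show ((2:ℝ)^j) = (2:ℝ)^(j:ℕ) from rfl, Real.logb_pow]
    rw [Real.logb_self_eq_one (by norm_num)]
    ring
  rw [Finset.sum_congr rfl h1, Finset.sum_sub_distrib, ← Finset.mul_sum, ← Finset.mul_sum,
      ← Finset.sum_mul, sum_w]
  have : (0:ℝ) < 2^j := by positivity
  field_simp

set_option maxHeartbeats 1000000 in
/-- For every integer `k ≥ 9`: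
`h(Bin(k)) − h(Bin(k−1)) ≤ log₂(k)/√k`. -/
theorem stmt_5 (k : ℕ) (hk : 9 ≤ k) :
    binEnt k - binEnt (k-1) ≤ Real.logb 2 k / Real.sqrt k := by
  obtain ⟨n, rfl⟩ : ∃ n, k = n + 1 := ⟨k - 1, by omega⟩
  have hn : 8 ≤ n := by omega
  simp only [Nat.add_sub_cancel]
  set K : ℝ := (n:ℝ)+1 with hK
  have hKpos : (0:ℝ) < K := by positivity
  have hL : (0:ℝ) < Real.log 2 := Real.log_pos (by norm_num)
  set X : ℕ → ℝ := fun s => Real.logb 2 (((n+1).choose s : ℕ) : ℝ) with hX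
  set Y : ℕ → ℝ := fun t => Real.logb 2 ((n.choose t : ℕ) : ℝ) with hY
  -- Step 1: difference identity
  have hD : binEnt (n+1) - binEnt n
      = (1/2^(n+1)) * ∑ t ∈ range (n+1), (n.choose t : ℝ) * (2 - X t - X (t+1) + 2 * Y t) := by
    have hkey := key n X (by simp [hX])
    have hsplit : ∑ t ∈ range (n+1), (n.choose t : ℝ) * (2 - X t - X (t+1) + 2 * Y t)
        = 2*2^n - (∑ t ∈ range (n+1), (n.choose t : ℝ) * (X t + X (t+1)))
          + 2 * ∑ t ∈ range (n+1), (n.choose t : ℝ) * Y t := by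
      have : ∀ t ∈ range (n+1), (n.choose t : ℝ) * (2 - X t - X (t+1) + 2 * Y t)
          = 2 * (n.choose t : ℝ) - (n.choose t : ℝ) * (X t + X (t+1))
            + 2 * ((n.choose t : ℝ) * Y t) := by intro t _; ring
      rw [Finset.sum_congr rfl this]
      rw [Finset.sum_add_distrib, Finset.sum_sub_distrib, ← Finset.mul_sum, ← Finset.mul_sum,
        sum_w n]
    rw [binEnt_eq (n+1), binEnt_eq n, hkey, hsplit]
    push_cast
    have h2 : (2:ℝ)^(n+1) = 2 * 2^n := by ring
    field_simp
    ring
  rw [hD]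
  -- Step 2: bound the sum
  have hsum : ∑ t ∈ range (n+1), (n.choose t : ℝ) * (2 - X t - X (t+1) + 2 * Y t)
      ≤ ∑ t ∈ range (n+1), (n.choose t : ℝ) * ((4*(K-t)*((t:ℝ)+1)/K^2 - 1)/Real.log 2) := by
    apply Finset.sum_le_sum
    intro t ht
    have ht' : t ≤ n := by simpa [Nat.lt_succ_iff] using ht
    have := bracket_le n t ht'
    exact mul_le_mul_of_nonneg_left (by rw [hK]; exact this) (Nat.cast_nonneg _)
  -- Step 3: evaluate the RHS sum
  have hM : ∑ t ∈ range (n+1), (n.choose t:ℝ) * (((t:ℝ)+1)*(K-(t:ℝ))) = 2^(n+1)*(K^2+K+2)/8 := by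
    have hMnat := sumM (n+1) (by omega)
    simp only [Nat.add_sub_cancel] at hMnat
    have hcast : ((∑ t ∈ range (n+1), n.choose t * ((t+1)*((n+1)-t)) : ℕ) : ℝ)
        = ∑ t ∈ range (n+1), (n.choose t:ℝ) * (((t:ℝ)+1)*(K-(t:ℝ))) := by
      rw [Nat.cast_sum]
      apply Finset.sum_congr rfl
      intro t ht
      have ht' : t ≤ n := by simpa [Nat.lt_succ_iff] using ht
      push_cast [Nat.cast_sub (show t ≤ n+1 by omega)]
      rw [hK]
      try ring
    rw [← hcast, eq_div_iff (show (8:ℝ) ≠ 0 by norm_num)]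
    calc ((∑ t ∈ range (n+1), n.choose t * ((t+1)*((n+1)-t)) : ℕ) : ℝ) * 8
        = ((8 * ∑ t ∈ range (n+1), n.choose t * ((t+1)*((n+1)-t)) : ℕ) : ℝ) := by
          push_cast; ring
      _ = ((2^(n+1) * ((n+1)*(n+1)+(n+1)+2) : ℕ) : ℝ) := by rw [hMnat]
      _ = 2^(n+1)*(K^2+K+2) := by rw [hK]; push_cast; ring
  have heval : ∑ t ∈ range (n+1), (n.choose t : ℝ) * ((4*(K-t)*((t:ℝ)+1)/K^2 - 1)/Real.log 2)
      = (4/(K^2*Real.log 2)) * (2^(n+1)*(K^2+K+2)/8) - 2^n/Real.log 2 := by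
    have hterm : ∀ t ∈ range (n+1), (n.choose t : ℝ) * ((4*(K-t)*((t:ℝ)+1)/K^2 - 1)/Real.log 2)
        = (4/(K^2*Real.log 2)) * ((n.choose t:ℝ) * (((t:ℝ)+1)*(K-(t:ℝ)))) - (n.choose t:ℝ) * (1/Real.log 2) := by
      intro t _
      field_simp
    rw [Finset.sum_congr rfl hterm, Finset.sum_sub_distrib, ← Finset.mul_sum, hM,
      ← Finset.sum_mul, sum_w n]
    ring
  -- Step 4: numeric bound
  have hfinal : (1/2^(n+1)) * ((4/(K^2*Real.log 2)) * (2^(n+1)*(K^2+K+2)/8) - 2^n/Real.log 2)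
      = (K+2)/(2*K^2*Real.log 2) := by
    have h2 : (2:ℝ)^(n+1) = 2 * 2^n := by ring
    field_simp
    ring
  calc (1/2^(n+1)) * ∑ t ∈ range (n+1), (n.choose t : ℝ) * (2 - X t - X (t+1) + 2 * Y t)
      ≤ (1/2^(n+1)) * ∑ t ∈ range (n+1), (n.choose t : ℝ) * ((4*(K-t)*((t:ℝ)+1)/K^2 - 1)/Real.log 2) :=
        mul_le_mul_of_nonneg_left hsum (by positivity)
    _ = (K+2)/(2*K^2*Real.log 2) := by rw [heval]; exact hfinal
    _ ≤ Real.logb 2 (((n+1:ℕ)):ℝ) / Real.sqrt (((n+1:ℕ)):ℝ) := by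
        have hcastK : (((n+1:ℕ)):ℝ) = K := by rw [hK]; push_cast; ring
        rw [hcastK, Real.logb, div_div]
        have hK9 : (9:ℝ) ≤ K := by
          rw [hK]
          have : (8:ℝ) ≤ (n:ℝ) := by exact_mod_cast hn
          linarith
        have hSpos : 0 < Real.sqrt K := Real.sqrt_pos.mpr hKpos
        set S := Real.sqrt K with hS
        have hS2 : S*S = K := Real.mul_self_sqrt hKpos.le
        have hS1 : (1:ℝ) ≤ S := by nlinarith
        have hSK : S ≤ K := by nlinarith
        have hlogK : (1:ℝ) ≤ Real.log K := by
          rw [Real.le_log_iff_exp_le hKpos]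
          calc Real.exp 1 ≤ 2.7182818286 := (Real.exp_one_lt_d9).le
            _ ≤ 9 := by norm_num
            _ ≤ K := hK9
        rw [div_le_div_iff₀ (by positivity) (by positivity)]
        have h1 : (K+2)*S ≤ 2*K^2 := by nlinarith
        nlinarith [mul_le_mul_of_nonneg_right h1 hL.le,
          mul_le_mul_of_nonneg_right hlogK (show (0:ℝ) ≤ 2*K^2*Real.log 2 by positivity)]
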